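/- Let q be an element of a field with q not a root of unity (or treat q as an indeterminate over ℚ), let a, b be field elements, and define c(n) = (b;q)_n / (a;q)_n where (x;q)_n = ∏_{j=0}^{n-1}(1 - q^j x), assuming all denominators are nonzero. Then det((c(i+j))_{i,j=0}^{n-1}) = q^{2·binom(n,3)} · ∏_{k=1}^{n-1} [ (b;q)_k · (q;q)_k · ∏_{j=0}^{k-1}(b - q^j a) ] / [ (q^{k-1}a; q)_k · (a;q)_{2k} ]. -/

import Mathlib

/-- The q-Pochhammer symbol `(x; q)_n = ∏_{j=0}^{n-1} (1 - q^j x)`. -/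
def qPoch {F : Type*} [Field F] (q x : F) (n : ℕ) : F :=
  ∏ j ∈ Finset.range n, (1 - q ^ j * x)

section QDAux

open Finset Polynomial

variable {F : Type*} [Field F]

theorem qd_qPoch_add (q x : F) (s t : ℕ) :
    qPoch q x (s + t) = qPoch q x s * qPoch q (q ^ s * x) t := by
  unfold qPoch
  rw [Finset.prod_range_add]
  congr 1
  refine Finset.prod_congr rfl fun j _ => ?_
  rw [pow_add]
  ring


theorem qd_natDegree_one_sub_C_mul_X (c : F) : (1 - Polynomial.C c * Polynomial.X).natDegree ≤ 1 := by
  refine le_trans (Polynomial.natDegree_sub_le _ _) ?_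
  simp only [Polynomial.natDegree_one, max_le_iff]
  exact ⟨by omega, le_trans (Polynomial.natDegree_C_mul_le _ _) (by simp)⟩

/-- The generic polynomial family -/
noncomputable def qd_Pg (d : ℕ) (α β : ℕ → F) (j : ℕ) : Polynomial F :=
  (∏ t ∈ Finset.range j, (1 - Polynomial.C (β t) * Polynomial.X)) *
    ∏ t ∈ Finset.Ico j d, (1 - Polynomial.C (α t) * Polynomial.X)

theorem qd_Pg_natDegree_le (d : ℕ) (α β : ℕ → F) (j : ℕ) (hj : j ≤ d) :
    (qd_Pg d α β j).natDegree ≤ d := by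
  unfold qd_Pg
  refine le_trans (Polynomial.natDegree_mul_le) ?_
  have h1 : (∏ t ∈ Finset.range j, (1 - Polynomial.C (β t) * Polynomial.X)).natDegree ≤ j := by
    refine le_trans (Polynomial.natDegree_prod_le _ _) ?_
    calc _ ≤ ∑ t ∈ Finset.range j, 1 :=
          Finset.sum_le_sum fun t _ => qd_natDegree_one_sub_C_mul_X _
      _ = j := by simp
  have h2 : (∏ t ∈ Finset.Ico j d, (1 - Polynomial.C (α t) * Polynomial.X)).natDegree ≤ d - j := by
    refine le_trans (Polynomial.natDegree_prod_le _ _) ?_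
    calc _ ≤ ∑ t ∈ Finset.Ico j d, 1 :=
          Finset.sum_le_sum fun t _ => qd_natDegree_one_sub_C_mul_X _
      _ = d - j := by simp [Nat.card_Ico]
  omega

theorem qd_Pg_coeff_zero (d : ℕ) (α β : ℕ → F) (j : ℕ) : (qd_Pg d α β j).coeff 0 = 1 := by
  rw [Polynomial.coeff_zero_eq_eval_zero]
  simp [qd_Pg, Polynomial.eval_prod]

theorem qd_Pg_eval (d : ℕ) (α β : ℕ → F) (j : ℕ) (x : F) :
    (qd_Pg d α β j).eval x
      = (∏ t ∈ Finset.range j, (1 - β t * x)) * ∏ t ∈ Finset.Ico j d, (1 - α t * x) := by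
  simp [qd_Pg, Polynomial.eval_prod]

theorem qd_Pg_sub (e : ℕ) (α β : ℕ → F) (j : ℕ) (hj : j ≤ e) :
    qd_Pg (e + 1) α β (j + 1) - qd_Pg (e + 1) α β j
      = Polynomial.C (α j - β j) * (Polynomial.X * qd_Pg e (fun t => α (t + 1)) β j) := by
  unfold qd_Pg
  rw [Finset.prod_range_succ]
  rw [Finset.prod_eq_prod_Ico_succ_bot (by omega : j < e + 1)]
  have hre : ∏ t ∈ Finset.Ico (j + 1) (e + 1), (1 - Polynomial.C (α t) * Polynomial.X)
      = ∏ t ∈ Finset.Ico j e, (1 - Polynomial.C (α (t + 1)) * Polynomial.X) := by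
    rw [Finset.prod_Ico_eq_prod_range, Finset.prod_Ico_eq_prod_range]
    rw [show e + 1 - (j + 1) = e - j from by omega]
    exact Finset.prod_congr rfl fun i _ => by rw [show j + 1 + i = j + i + 1 from by omega]
  rw [hre]
  rw [Polynomial.C_sub]
  ring

theorem qd_coeffDet : ∀ (n : ℕ) (α β : ℕ → F),
    (Matrix.of fun k j : Fin (n + 1) => (qd_Pg n α β j.1).coeff k.1).det
      = ∏ t ∈ Finset.range n, ∏ s ∈ Finset.range (t + 1), (α t - β s)
  | 0, α, β => by
      rw [Matrix.det_fin_one]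
      simp [Matrix.of_apply, qd_Pg_coeff_zero]
  | (n + 1), α, β => by
      have key := qd_coeffDet n (fun t => α (t + 1)) β
      set B : Matrix (Fin (n + 2)) (Fin (n + 2)) F := Matrix.of fun k j =>
        if j.1 = 0 then (qd_Pg (n + 1) α β 0).coeff k.1
        else (Polynomial.C (α (j.1 - 1) - β (j.1 - 1)) *
          (Polynomial.X * qd_Pg n (fun t => α (t + 1)) β (j.1 - 1))).coeff k.1 with hB
      have hdet : (Matrix.of fun k j : Fin (n + 2) => (qd_Pg (n + 1) α β j.1).coeff k.1).det
          = B.det := by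
        refine Matrix.det_eq_of_forall_col_eq_smul_add_pred (fun _ => 1) (fun i => ?_)
          (fun i j => ?_)
        · simp [hB]
        · have hsub := qd_Pg_sub n α β j.1 (by omega)
          have : qd_Pg (n + 1) α β (j.1 + 1)
              = Polynomial.C (α j.1 - β j.1) * (Polynomial.X * qd_Pg n (fun t => α (t + 1)) β j.1)
                + qd_Pg (n + 1) α β j.1 := by linear_combination hsub
          simp only [Matrix.of_apply, hB, Fin.val_succ, Fin.coe_castSucc, one_mul]
          rw [if_neg (by omega), this]
          simp [Polynomial.coeff_add]
      rw [hdet, Matrix.det_succ_row_zero, Fin.sum_univ_succ]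
      have hB0 : ∀ j : Fin (n + 1), B 0 j.succ = 0 := by
        intro j
        simp only [hB, Matrix.of_apply, Fin.val_succ, Fin.val_zero]
        rw [if_neg (by omega)]
        rw [Polynomial.coeff_C_mul, Polynomial.mul_coeff_zero]
        simp
      rw [Finset.sum_eq_zero (fun j _ => by rw [hB0 j]; ring)]
      have hB00 : B 0 0 = 1 := by simp [hB, qd_Pg_coeff_zero]
      rw [hB00, add_zero, Fin.val_zero, pow_zero, one_mul, one_mul]
      have hminor : (B.submatrix Fin.succ (Fin.succAbove 0))
          = Matrix.of fun k j : Fin (n + 1) => (α j.1 - β j.1) *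
              (qd_Pg n (fun t => α (t + 1)) β j.1).coeff k.1 := by
        ext k j
        simp only [Matrix.submatrix_apply, Fin.zero_succAbove, hB, Matrix.of_apply,
          Fin.val_succ]
        rw [if_neg (by omega)]
        simp only [Nat.add_sub_cancel]
        rw [Polynomial.coeff_C_mul, Polynomial.coeff_X_mul]
      rw [hminor, Matrix.det_mul_row (fun j : Fin (n + 1) => α j.1 - β j.1)
          (fun k j : Fin (n + 1) => (qd_Pg n (fun t => α (t + 1)) β j.1).coeff k.1),
        show Matrix.det (fun k j : Fin (n + 1) => (qd_Pg n (fun t => α (t + 1)) β j.1).coeff k.1)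
            = ∏ t ∈ Finset.range n, ∏ s ∈ Finset.range (t + 1), (α (t + 1) - β s) from key]
      rw [Fin.prod_univ_eq_prod_range (fun j => α j - β j) (n + 1)]
      -- now the RHS bookkeeping
      have hrhs : ∏ t ∈ Finset.range (n + 1), ∏ s ∈ Finset.range (t + 1), (α t - β s)
          = (∏ t ∈ Finset.range (n + 1), (α t - β t)) *
            ∏ t ∈ Finset.range n, ∏ s ∈ Finset.range (t + 1), (α (t + 1) - β s) := by
        have h1 : ∀ t, ∏ s ∈ Finset.range (t + 1), (α t - β s)
            = (∏ s ∈ Finset.range t, (α t - β s)) * (α t - β t) :=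
          fun t => Finset.prod_range_succ _ _
        calc ∏ t ∈ Finset.range (n + 1), ∏ s ∈ Finset.range (t + 1), (α t - β s)
            = ∏ t ∈ Finset.range (n + 1),
                ((∏ s ∈ Finset.range t, (α t - β s)) * (α t - β t)) :=
              Finset.prod_congr rfl fun t _ => h1 t
          _ = (∏ t ∈ Finset.range (n + 1), ∏ s ∈ Finset.range t, (α t - β s)) *
                ∏ t ∈ Finset.range (n + 1), (α t - β t) := Finset.prod_mul_distrib
          _ = _ := by
              rw [Finset.prod_range_succ' (fun t => ∏ s ∈ Finset.range t, (α t - β s)) n]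
              simp [mul_comm]
      rw [hrhs]

theorem qd_evalDet (n : ℕ) (α β X : ℕ → F) :
    (Matrix.of fun i j : Fin (n + 1) => (qd_Pg n α β j.1).eval (X i.1)).det
      = (∏ i : Fin (n + 1), ∏ j ∈ Finset.Ioi i, (X j.1 - X i.1)) *
        ∏ t ∈ Finset.range n, ∏ s ∈ Finset.range (t + 1), (α t - β s) := by
  have hfac : (Matrix.of fun i j : Fin (n + 1) => (qd_Pg n α β j.1).eval (X i.1))
      = (Matrix.vandermonde fun i : Fin (n + 1) => X i.1) *
        (Matrix.of fun k j : Fin (n + 1) => (qd_Pg n α β j.1).coeff k.1) := by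
    ext i j
    rw [Matrix.mul_apply]
    simp only [Matrix.vandermonde_apply, Matrix.of_apply]
    rw [Polynomial.eval_eq_sum_range'
      (lt_of_le_of_lt (qd_Pg_natDegree_le n α β j.1 (by omega)) (Nat.lt_succ_self n))]
    rw [← Fin.sum_univ_eq_sum_range (fun k => (qd_Pg n α β j.1).coeff k * X i.1 ^ k) (n + 1)]
    exact Finset.sum_congr rfl fun k _ => mul_comm _ _
  rw [hfac, Matrix.det_mul, Matrix.det_vandermonde, qd_coeffDet]

theorem qd_entry_fact (q a b : F) (ha : ∀ m : ℕ, qPoch q a m ≠ 0) (m : ℕ) (i j : Fin (m + 1)) :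
    qPoch q b (i.1 + j.1) / qPoch q a (i.1 + j.1)
      = (qPoch q b i.1 / qPoch q a (m + i.1)) *
        (qd_Pg m (fun t => q ^ t * a) (fun t => q ^ t * b) j.1).eval (q ^ i.1) := by
  have hjm : j.1 ≤ m := by omega
  rw [qd_Pg_eval]
  set Bp := ∏ t ∈ Finset.range j.1, (1 - q ^ t * b * q ^ i.1) with hBp
  set Ap := ∏ t ∈ Finset.Ico j.1 m, (1 - q ^ t * a * q ^ i.1) with hAp
  have hb : qPoch q b (i.1 + j.1) = qPoch q b i.1 * Bp := by
    rw [qd_qPoch_add]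
    congr 1
    unfold qPoch
    exact Finset.prod_congr rfl fun t _ => by ring
  have ha2 : qPoch q a (m + i.1) = qPoch q a (i.1 + j.1) * Ap := by
    rw [show m + i.1 = (i.1 + j.1) + (m - j.1) from by omega, qd_qPoch_add]
    congr 1
    unfold qPoch
    rw [hAp, Finset.prod_Ico_eq_prod_range]
    refine Finset.prod_congr rfl fun t _ => ?_
    congr 1
    rw [pow_add, pow_add]
    ring
  have h1 : qPoch q a (i.1 + j.1) ≠ 0 := ha _
  have h2 : Ap ≠ 0 := by
    intro h
    exact ha (m + i.1) (by rw [ha2, h, mul_zero])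
  rw [hb, ha2]
  field_simp

theorem qd_main_det (q a b : F) (ha : ∀ m : ℕ, qPoch q a m ≠ 0) (m : ℕ) :
    (Matrix.of (fun i j : Fin (m + 1) =>
        qPoch q b (i.1 + j.1) / qPoch q a (i.1 + j.1))).det
      = (∏ i : Fin (m + 1), (qPoch q b i.1 / qPoch q a (m + i.1))) *
        ((∏ i : Fin (m + 1), ∏ j ∈ Finset.Ioi i, (q ^ j.1 - q ^ i.1)) *
          ∏ t ∈ Finset.range m, ∏ s ∈ Finset.range (t + 1), (q ^ t * a - q ^ s * b)) := by
  have hM : (Matrix.of (fun i j : Fin (m + 1) =>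
        qPoch q b (i.1 + j.1) / qPoch q a (i.1 + j.1)))
      = Matrix.of (fun i j : Fin (m + 1) =>
          (qPoch q b i.1 / qPoch q a (m + i.1)) *
            (Matrix.of (fun i j : Fin (m + 1) =>
              (qd_Pg m (fun t => q ^ t * a) (fun t => q ^ t * b) j.1).eval
                ((fun i => q ^ i) i.1)) i j)) := by
    ext i j
    exact qd_entry_fact q a b ha m i j
  rw [hM, Matrix.det_mul_column, qd_evalDet]

theorem qd_qPoch_zero (q x : F) : qPoch q x 0 = 1 := by simp [qPoch]

theorem qd_qPoch_q (q : F) (k : ℕ) : qPoch q q k = ∏ t ∈ Finset.range k, (1 - q ^ (t + 1)) := by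
  unfold qPoch
  exact Finset.prod_congr rfl fun t _ => by rw [pow_succ]

theorem qd_Ioc_eq_Ico (a b : ℕ) : Finset.Ioc a b = Finset.Ico (a + 1) (b + 1) := by
  ext x
  simp only [Finset.mem_Ioc, Finset.mem_Ico]
  omega

theorem qd_V_eq (q : F) (m : ℕ) :
    (∏ i : Fin (m + 1), ∏ j ∈ Finset.Ioi i, (q ^ j.1 - q ^ i.1))
      = (-1 : F) ^ (∑ i ∈ Finset.range (m + 1), (m - i)) *
        (q ^ (∑ i ∈ Finset.range (m + 1), i * (m - i)) *
          ∏ k ∈ Finset.range (m + 1), qPoch q q k) := by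
  have inner : ∀ i : Fin (m + 1), (∏ j ∈ Finset.Ioi i, (q ^ j.1 - q ^ i.1))
      = (-1 : F) ^ (m - i.1) * (q ^ (i.1 * (m - i.1)) * qPoch q q (m - i.1)) := by
    intro i
    have h1 : (∏ j ∈ Finset.Ioi i, (q ^ j.1 - q ^ i.1))
        = ∏ x ∈ Finset.Ioc i.1 (m + 1 - 1), (q ^ x - q ^ i.1) := by
      rw [show Finset.Ioc i.1 (m + 1 - 1) = (Finset.Ioi i).map Fin.valEmbedding by
          rw [Fin.map_valEmbedding_Ioi]; ext x; simp, Finset.prod_map]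
      rfl
    simp only [Nat.add_sub_cancel] at h1
    rw [h1, qd_Ioc_eq_Ico, Finset.prod_Ico_eq_prod_range]
    rw [show m + 1 - (i.1 + 1) = m - i.1 from by omega]
    have h2 : ∀ t, q ^ (i.1 + 1 + t) - q ^ i.1
        = (-1 : F) * (q ^ i.1 * (1 - q ^ (t + 1))) := by
      intro t
      rw [show i.1 + 1 + t = i.1 + (t + 1) from by omega, pow_add]
      ring
    rw [Finset.prod_congr rfl fun t _ => h2 t]
    rw [Finset.prod_mul_distrib, Finset.prod_mul_distrib, Finset.prod_const, Finset.prod_const]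
    rw [Finset.card_range, qd_qPoch_q, ← pow_mul]
  have hrefl := Finset.prod_range_reflect (fun k => qPoch q q k) (m + 1)
  simp only [Nat.add_sub_cancel] at hrefl
  calc (∏ i : Fin (m + 1), ∏ j ∈ Finset.Ioi i, (q ^ j.1 - q ^ i.1))
      = ∏ i : Fin (m + 1),
          ((-1 : F) ^ (m - i.1) * (q ^ (i.1 * (m - i.1)) * qPoch q q (m - i.1))) :=
        Finset.prod_congr rfl fun i _ => inner i
    _ = ∏ i ∈ Finset.range (m + 1),
          ((-1 : F) ^ (m - i) * (q ^ (i * (m - i)) * qPoch q q (m - i))) :=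
        Fin.prod_univ_eq_prod_range
          (fun i => (-1 : F) ^ (m - i) * (q ^ (i * (m - i)) * qPoch q q (m - i))) (m + 1)
    _ = _ := by
        rw [Finset.prod_mul_distrib, Finset.prod_mul_distrib,
          Finset.prod_pow_eq_pow_sum, Finset.prod_pow_eq_pow_sum, hrefl]

theorem qd_A_eq (q a b : F) (m : ℕ) :
    (∏ t ∈ Finset.range m, ∏ s ∈ Finset.range (t + 1), (q ^ t * a - q ^ s * b))
      = (-1 : F) ^ (∑ t ∈ Finset.range m, (t + 1)) *
        (q ^ (∑ t ∈ Finset.range m, ∑ s ∈ Finset.range (t + 1), s) *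
          ∏ t ∈ Finset.range m, ∏ s ∈ Finset.range (t + 1), (b - q ^ s * a)) := by
  have inner : ∀ t, (∏ s ∈ Finset.range (t + 1), (q ^ t * a - q ^ s * b))
      = (-1 : F) ^ (t + 1) * (q ^ (∑ s ∈ Finset.range (t + 1), s) *
          ∏ s ∈ Finset.range (t + 1), (b - q ^ s * a)) := by
    intro t
    have h2 : ∀ s ∈ Finset.range (t + 1), q ^ t * a - q ^ s * b
        = (-1 : F) * (q ^ s * (b - q ^ (t - s) * a)) := by
      intro s hs
      have hst : s ≤ t := by simpa [Nat.lt_succ_iff] using hs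
      rw [show (t : ℕ) = s + (t - s) from by omega, pow_add,
        show s + (t - s) - s = t - s from by omega]
      ring
    have h3 : (∏ s ∈ Finset.range (t + 1), (b - q ^ (t - s) * a))
        = ∏ s ∈ Finset.range (t + 1), (b - q ^ s * a) := by
      have := Finset.prod_range_reflect (fun s => b - q ^ s * a) (t + 1)
      simpa using this
    rw [Finset.prod_congr rfl h2, Finset.prod_mul_distrib, Finset.prod_mul_distrib,
      Finset.prod_const, Finset.card_range, Finset.prod_pow_eq_pow_sum, h3]
  calc (∏ t ∈ Finset.range m, ∏ s ∈ Finset.range (t + 1), (q ^ t * a - q ^ s * b))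
      = ∏ t ∈ Finset.range m, ((-1 : F) ^ (t + 1) * (q ^ (∑ s ∈ Finset.range (t + 1), s) *
          ∏ s ∈ Finset.range (t + 1), (b - q ^ s * a))) :=
        Finset.prod_congr rfl fun t _ => inner t
    _ = _ := by
        rw [Finset.prod_mul_distrib, Finset.prod_mul_distrib,
          Finset.prod_pow_eq_pow_sum, Finset.prod_pow_eq_pow_sum]


theorem qd_sum_range_id_choose : ∀ n : ℕ, ∑ i ∈ Finset.range n, i = n.choose 2
  | 0 => rfl
  | (n + 1) => by
      rw [Finset.sum_range_succ, qd_sum_range_id_choose n,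
        show (n + 1).choose 2 = n.choose 1 + n.choose 2 from Nat.choose_succ_succ n 1,
        Nat.choose_one_right]
      omega

theorem qd_S2_choose : ∀ m : ℕ,
    ∑ t ∈ Finset.range m, ∑ s ∈ Finset.range (t + 1), s = (m + 1).choose 3
  | 0 => rfl
  | (m + 1) => by
      rw [Finset.sum_range_succ, qd_S2_choose m, qd_sum_range_id_choose (m + 1),
        show (m + 2).choose 3 = (m + 1).choose 2 + (m + 1).choose 3 from
          Nat.choose_succ_succ (m + 1) 2]
      omega

theorem qd_S1_choose : ∀ m : ℕ,
    ∑ i ∈ Finset.range (m + 1), i * (m - i) = (m + 1).choose 3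
  | 0 => rfl
  | (m + 1) => by
      have step : ∑ i ∈ Finset.range (m + 2), i * (m + 1 - i)
          = ∑ i ∈ Finset.range (m + 1), (i * (m - i) + i) := by
        rw [Finset.sum_range_succ, show (m + 1) * (m + 1 - (m + 1)) = 0 from by simp, add_zero]
        refine Finset.sum_congr rfl fun i hi => ?_
        have hi' : i ≤ m := by simpa [Nat.lt_succ_iff] using hi
        rw [show m + 1 - i = (m - i) + 1 from by omega, Nat.mul_succ]
      rw [step, Finset.sum_add_distrib, qd_S1_choose m, qd_sum_range_id_choose (m + 1),
        show (m + 2).choose 3 = (m + 1).choose 2 + (m + 1).choose 3 from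
          Nat.choose_succ_succ (m + 1) 2]
      omega

theorem qd_c1_eq_c2 (m : ℕ) :
    ∑ i ∈ Finset.range (m + 1), (m - i) = ∑ t ∈ Finset.range m, (t + 1) := by
  have h1 := Finset.sum_range_reflect (fun i => i) (m + 1)
  simp only [Nat.add_sub_cancel] at h1
  have h2 := Finset.sum_range_succ' (fun i => i + 0) m
  simp only [add_zero] at h2
  omega


theorem qd_prod_range_two_mul (g : ℕ → F) : ∀ m : ℕ,
    ∏ i ∈ Finset.range (2 * m), g i = ∏ k ∈ Finset.range m, (g (2 * k) * g (2 * k + 1))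
  | 0 => by simp
  | (m + 1) => by
      rw [show 2 * (m + 1) = (2 * m + 1) + 1 from by omega, Finset.prod_range_succ,
        Finset.prod_range_succ, qd_prod_range_two_mul g m, Finset.prod_range_succ]
      ring

theorem qd_den_eq (q a : F) (ha : ∀ m : ℕ, qPoch q a m ≠ 0) (m : ℕ) :
    ∏ i ∈ Finset.range (m + 1), qPoch q a (m + i)
      = ∏ k ∈ Finset.range m, (qPoch q (q ^ k * a) (k + 1) * qPoch q a (2 * (k + 1))) := by
  have hz : (∏ j ∈ Finset.range m, qPoch q a j) ≠ 0 :=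
    Finset.prod_ne_zero_iff.2 fun j _ => ha j
  refine mul_left_cancel₀ hz ?_
  have lhs : (∏ j ∈ Finset.range m, qPoch q a j) *
      ∏ i ∈ Finset.range (m + 1), qPoch q a (m + i)
      = ∏ j ∈ Finset.range (2 * m + 1), qPoch q a j := by
    rw [show 2 * m + 1 = m + (m + 1) from by omega]
    exact (Finset.prod_range_add (fun j => qPoch q a j) m (m + 1)).symm
  rw [lhs]
  have h1 : ∀ k, qPoch q a k * qPoch q (q ^ k * a) (k + 1) = qPoch q a (2 * k + 1) := by
    intro k
    rw [show 2 * k + 1 = k + (k + 1) from by omega]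
    exact (qd_qPoch_add q a k (k + 1)).symm
  calc ∏ j ∈ Finset.range (2 * m + 1), qPoch q a j
      = (∏ j ∈ Finset.range (2 * m), qPoch q a (j + 1)) * qPoch q a 0 :=
        Finset.prod_range_succ' (fun j => qPoch q a j) (2 * m)
    _ = ∏ k ∈ Finset.range m, (qPoch q a (2 * k + 1) * qPoch q a (2 * k + 1 + 1)) := by
        rw [qd_qPoch_zero, mul_one, qd_prod_range_two_mul (fun j => qPoch q a (j + 1)) m]
    _ = ∏ k ∈ Finset.range m, (qPoch q a k *
          (qPoch q (q ^ k * a) (k + 1) * qPoch q a (2 * (k + 1)))) := by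
        refine Finset.prod_congr rfl fun k _ => ?_
        rw [← mul_assoc, h1 k, show 2 * k + 1 + 1 = 2 * (k + 1) from by omega]
    _ = (∏ j ∈ Finset.range m, qPoch q a j) *
          ∏ k ∈ Finset.range m, (qPoch q (q ^ k * a) (k + 1) * qPoch q a (2 * (k + 1))) :=
        Finset.prod_mul_distrib


end QDAux

theorem stmt_12 {F : Type*} [Field F] (q a b : F)
    (hq : ∀ m : ℕ, 1 ≤ m → q ^ m ≠ 1)
    (ha : ∀ m : ℕ, qPoch q a m ≠ 0)
    (hka : ∀ k : ℕ, 1 ≤ k → qPoch q (q ^ (k - 1) * a) k ≠ 0)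
    (n : ℕ) :
    Matrix.det (Matrix.of (fun i j : Fin n =>
        qPoch q b (i.1 + j.1) / qPoch q a (i.1 + j.1)))
      = q ^ (2 * n.choose 3) *
          ∏ k ∈ Finset.Icc 1 (n - 1),
            (qPoch q b k * qPoch q q k * ∏ j ∈ Finset.range k, (b - q ^ j * a)) /
              (qPoch q (q ^ (k - 1) * a) k * qPoch q a (2 * k)) := by

  rcases n with _ | m
  · simp [Matrix.det_isEmpty]
  rw [qd_main_det q a b ha m, show m + 1 - 1 = m from rfl]
  -- convert Icc product to range product
  have hIcc : ∀ f : ℕ → F, ∏ k ∈ Finset.Icc 1 m, f k = ∏ k ∈ Finset.range m, f (k + 1) := by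
    intro f
    rw [← Finset.Ico_add_one_right_eq_Icc, Finset.prod_Ico_eq_prod_range]
    exact Finset.prod_congr (by norm_num) fun k _ => by rw [Nat.add_comm]
  rw [hIcc]
  simp only [Nat.add_sub_cancel]
  have hsplit : (∏ x ∈ Finset.range m,
        (qPoch q b (x + 1) * qPoch q q (x + 1) * ∏ j ∈ Finset.range (x + 1), (b - q ^ j * a)) /
          (qPoch q (q ^ x * a) (x + 1) * qPoch q a (2 * (x + 1))))
      = (∏ x ∈ Finset.range m,
          (qPoch q b (x + 1) * qPoch q q (x + 1) * ∏ j ∈ Finset.range (x + 1), (b - q ^ j * a))) /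
        ∏ x ∈ Finset.range m, (qPoch q (q ^ x * a) (x + 1) * qPoch q a (2 * (x + 1))) :=
    Finset.prod_div_distrib _ _
  rw [hsplit]
  -- numerator split
  have hnum : (∏ k ∈ Finset.range m,
        (qPoch q b (k + 1) * qPoch q q (k + 1) * ∏ j ∈ Finset.range (k + 1), (b - q ^ j * a)))
      = (∏ k ∈ Finset.range m, qPoch q b (k + 1)) *
        (∏ k ∈ Finset.range m, qPoch q q (k + 1)) *
        ∏ k ∈ Finset.range m, ∏ j ∈ Finset.range (k + 1), (b - q ^ j * a) := by
    rw [Finset.prod_mul_distrib, Finset.prod_mul_distrib]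
  rw [hnum, ← qd_den_eq q a ha m]
  -- row factors
  rw [Fin.prod_univ_eq_prod_range (fun i => qPoch q b i / qPoch q a (m + i)) (m + 1),
    Finset.prod_div_distrib]
  -- PB and PQ identities
  have hPB : ∏ i ∈ Finset.range (m + 1), qPoch q b i
      = ∏ k ∈ Finset.range m, qPoch q b (k + 1) := by
    rw [Finset.prod_range_succ' (fun i => qPoch q b i) m, qd_qPoch_zero, mul_one]
  have hPQ : ∏ k ∈ Finset.range (m + 1), qPoch q q k
      = ∏ k ∈ Finset.range m, qPoch q q (k + 1) := by
    rw [Finset.prod_range_succ' (fun i => qPoch q q i) m, qd_qPoch_zero, mul_one]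
  rw [qd_V_eq q m, qd_A_eq q a b m, hPB, hPQ]
  -- signs
  have hsign : (-1 : F) ^ (∑ i ∈ Finset.range (m + 1), (m - i)) *
      (-1 : F) ^ (∑ t ∈ Finset.range m, (t + 1)) = 1 := by
    rw [← qd_c1_eq_c2 m, ← pow_add]
    exact Even.neg_one_pow ⟨∑ i ∈ Finset.range (m + 1), (m - i), by omega⟩
  -- powers
  have hpow : q ^ (∑ i ∈ Finset.range (m + 1), i * (m - i)) *
      q ^ (∑ t ∈ Finset.range m, ∑ s ∈ Finset.range (t + 1), s)
      = q ^ (2 * (m + 1).choose 3) := by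
    rw [← pow_add, qd_S1_choose m, qd_S2_choose m]
    ring_nf
  have hPA : (∏ i ∈ Finset.range (m + 1), qPoch q a (m + i)) ≠ 0 :=
    Finset.prod_ne_zero_iff.2 fun i _ => ha _
  rw [← hpow]
  field_simp
  simp only [mul_comm a (q ^ _)]
  linear_combination ((q ^ (∑ i ∈ Finset.range (m + 1), i * (m - i)) *
      q ^ (∑ t ∈ Finset.range m, ∑ s ∈ Finset.range (t + 1), s) *
      (∏ k ∈ Finset.range m, qPoch q b (k + 1)) *
      (∏ k ∈ Finset.range m, qPoch q q (k + 1)) *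
      (∏ k ∈ Finset.range m, ∏ j ∈ Finset.range (k + 1), (b - q ^ j * a)))) * hsign
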